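/- Let A be a Hopf algebra over ℂ with bijective antipode, and let (B,P) be a nested pair of quantum homogeneous A-spaces (i.e. B ⊆ P ⊆ A are both quantum homogeneous A-spaces). Then P is faithfully flat as a right B-module. -/

import Mathlib

/-!
STATEMENT 0: Let A be a Hopf algebra over ℂ with bijective antipode, and let (B,P) be a
nested pair of quantum homogeneous A-spaces (i.e. B ⊆ P ⊆ A are both quantum homogeneous
A-spaces).  Then P is faithfully flat as a right B-module.
-/

open TensorProduct

noncomputable section

namespace QHS

variable (A : Type) [Ring A] [HopfAlgebra ℂ A]

/-- `B` is a left coideal of `A`: `Δ(B) ⊆ A ⊗ B`. -/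
def IsLeftCoideal (B : Subalgebra ℂ A) : Prop :=
  ∀ b ∈ B, Coalgebra.comul (R := ℂ) b ∈
    LinearMap.range (TensorProduct.map (LinearMap.id : A →ₗ[ℂ] A) B.toSubmodule.subtype)

/-- The right ideal `B⁺A` generated by the augmentation ideal `B⁺ = B ∩ ker ε`. -/
def augL (B : Subalgebra ℂ A) : Submodule ℂ A :=
  Submodule.span ℂ {x | ∃ b a : A, b ∈ B ∧ Coalgebra.counit (R := ℂ) b = 0 ∧ x = b * a}

/-- The left ideal `AB⁺` generated by the augmentation ideal `B⁺ = B ∩ ker ε`. -/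
def augR (B : Subalgebra ℂ A) : Submodule ℂ A :=
  Submodule.span ℂ {x | ∃ b a : A, b ∈ B ∧ Coalgebra.counit (R := ℂ) b = 0 ∧ x = a * b}

variable {A} in
/-- The relations defining the balanced tensor product `P ⊗_B M`, for `B ⊆ P` subalgebras
of `A` and `M` a left `B`-module. -/
def relRels {B P : Subalgebra ℂ A} (h : B ≤ P) (M : Type) [AddCommGroup M] [Module ℂ M]
    [Module (↥B) M] [IsScalarTower ℂ (↥B) M] : Submodule ℂ (↥P ⊗[ℂ] M) :=
  Submodule.span ℂ {x | ∃ (p : ↥P) (b : ↥B) (m : M),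
    x = (p * Subalgebra.inclusion h b) ⊗ₜ[ℂ] m - p ⊗ₜ[ℂ] (b • m)}

variable {A} in
/-- The balanced tensor product `P ⊗_B M` of the right `B`-module `P` with a left
`B`-module `M`. -/
def RelT {B P : Subalgebra ℂ A} (h : B ≤ P) (M : Type) [AddCommGroup M] [Module ℂ M]
    [Module (↥B) M] [IsScalarTower ℂ (↥B) M] : Type :=
  (↥P ⊗[ℂ] M) ⧸ relRels h M

variable {A} in
instance {B P : Subalgebra ℂ A} (h : B ≤ P) (M : Type) [AddCommGroup M] [Module ℂ M]
    [Module (↥B) M] [IsScalarTower ℂ (↥B) M] : AddCommGroup (RelT h M) :=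
  inferInstanceAs (AddCommGroup ((↥P ⊗[ℂ] M) ⧸ relRels h M))

variable {A} in
instance {B P : Subalgebra ℂ A} (h : B ≤ P) (M : Type) [AddCommGroup M] [Module ℂ M]
    [Module (↥B) M] [IsScalarTower ℂ (↥B) M] : Module ℂ (RelT h M) :=
  inferInstanceAs (Module ℂ ((↥P ⊗[ℂ] M) ⧸ relRels h M))

variable {A} in
/-- The map `P ⊗_B M → P ⊗_B N` induced by a `B`-module map `f : M → N`
(functoriality of `P ⊗_B -`). -/
def RelT.map {B P : Subalgebra ℂ A} (h : B ≤ P)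
    {M N : Type} [AddCommGroup M] [Module ℂ M] [Module (↥B) M] [IsScalarTower ℂ (↥B) M]
    [AddCommGroup N] [Module ℂ N] [Module (↥B) N] [IsScalarTower ℂ (↥B) N]
    (f : M →ₗ[↥B] N) : RelT h M →ₗ[ℂ] RelT h N :=
  Submodule.mapQ (relRels h M) (relRels h N)
    (TensorProduct.map (LinearMap.id : ↥P →ₗ[ℂ] ↥P) (f.restrictScalars ℂ))
    (by
      rw [relRels, Submodule.span_le]
      rintro x ⟨p, b, m, rfl⟩
      have : TensorProduct.map (LinearMap.id : ↥P →ₗ[ℂ] ↥P) (f.restrictScalars ℂ)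
          ((p * Subalgebra.inclusion h b) ⊗ₜ[ℂ] m - p ⊗ₜ[ℂ] (b • m))
          = (p * Subalgebra.inclusion h b) ⊗ₜ[ℂ] (f m) - p ⊗ₜ[ℂ] (b • f m) := by
        simp [map_smul]
      simp only [SetLike.mem_coe, Submodule.mem_comap, this]
      exact Submodule.subset_span ⟨p, b, f m, rfl⟩)

/-- `P` is faithfully flat as a **right** `B`-module: the functor `P ⊗_B -` from left
`B`-modules to vector spaces preserves and reflects exact sequences. -/
def IsFaithfullyFlatRightOver (B P : Subalgebra ℂ A) (h : B ≤ P) : Prop :=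
  ∀ (M N L : Type) [AddCommGroup M] [Module ℂ M] [Module (↥B) M] [IsScalarTower ℂ (↥B) M]
    [AddCommGroup N] [Module ℂ N] [Module (↥B) N] [IsScalarTower ℂ (↥B) N]
    [AddCommGroup L] [Module ℂ L] [Module (↥B) L] [IsScalarTower ℂ (↥B) L]
    (f : M →ₗ[↥B] N) (g : N →ₗ[↥B] L),
    Function.Exact f g ↔ Function.Exact (RelT.map h f) (RelT.map h g)

/-- A quantum homogeneous `A`-space: a left coideal subalgebra `B ⊆ A` such that `A` is
faithfully flat as a right `B`-module and `B⁺A = AB⁺`. -/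
structure IsQuantumHomogeneousSpace (B : Subalgebra ℂ A) : Prop where
  leftCoideal : IsLeftCoideal A B
  faithfullyFlat : IsFaithfullyFlatRightOver A B ⊤ le_top
  augEq : augL A B = augR A B

end QHS

namespace QHS
section FFAux
-- === aux ===
section Aux
variable {A : Type} [Ring A] [HopfAlgebra ℂ A] {B P : Subalgebra ℂ A} (h : B ≤ P)
variable (M : Type) [AddCommGroup M] [Module ℂ M] [Module ↥B M] [IsScalarTower ℂ ↥B M]

def mkT : ↥P ⊗[ℂ] M →ₗ[ℂ] RelT h M := (relRels h M).mkQ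

lemma mkT_surjective : Function.Surjective (mkT h M) := Submodule.mkQ_surjective _

lemma mkT_rel (p : ↥P) (b : ↥B) (m : M) :
    mkT h M ((p * Subalgebra.inclusion h b) ⊗ₜ[ℂ] m) = mkT h M (p ⊗ₜ[ℂ] (b • m)) := by
  rw [← sub_eq_zero, ← map_sub]
  exact (Submodule.Quotient.mk_eq_zero _).mpr (Submodule.subset_span ⟨p, b, m, rfl⟩)

lemma relT_hom_ext {C : Type} [AddCommGroup C] [Module ℂ C] {F G : RelT h M →ₗ[ℂ] C}
    (hFG : ∀ (p : ↥P) (m : M), F (mkT h M (p ⊗ₜ[ℂ] m)) = G (mkT h M (p ⊗ₜ[ℂ] m))) : F = G := by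
  apply Submodule.linearMap_qext
  exact TensorProduct.ext' hFG

def pAct (p : ↥P) : RelT h M →ₗ[ℂ] RelT h M :=
  Submodule.mapQ _ _ (TensorProduct.map (LinearMap.mulLeft ℂ p) LinearMap.id) (by
    rw [relRels, Submodule.span_le]
    rintro x ⟨q, b, m, rfl⟩
    simp only [SetLike.mem_coe, Submodule.mem_comap, map_sub, TensorProduct.map_tmul,
      LinearMap.mulLeft_apply, LinearMap.id_apply]
    rw [← mul_assoc]
    exact Submodule.subset_span ⟨p * q, b, m, rfl⟩)

lemma pAct_mk (p q : ↥P) (m : M) :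
    pAct h M p (mkT h M (q ⊗ₜ[ℂ] m)) = mkT h M ((p * q) ⊗ₜ[ℂ] m) := by
  rfl

instance : SMul ↥P (RelT h M) := ⟨fun p x => pAct h M p x⟩

lemma pSmul_def (p : ↥P) (x : RelT h M) : p • x = pAct h M p x := rfl

instance : Module ↥P (RelT h M) where
  one_smul x := by
    have : pAct h M 1 = LinearMap.id := relT_hom_ext h M (by simp [pAct_mk])
    rw [pSmul_def, this]; rfl
  mul_smul p q x := by
    have : pAct h M (p * q) = (pAct h M p).comp (pAct h M q) :=
      relT_hom_ext h M (by simp [pAct_mk, mul_assoc])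
    simp only [pSmul_def, this, LinearMap.comp_apply]
  smul_zero p := map_zero (pAct h M p)
  smul_add p x y := map_add (pAct h M p) x y
  add_smul p q x := by
    have : pAct h M (p + q) = pAct h M p + pAct h M q :=
      relT_hom_ext h M (by simp [pAct_mk, add_mul, TensorProduct.add_tmul])
    simp only [pSmul_def, this, LinearMap.add_apply]
  zero_smul x := by
    have : pAct h M (0 : ↥P) = 0 :=
      relT_hom_ext h M (by simp [pAct_mk, TensorProduct.zero_tmul])
    simp only [pSmul_def, this, LinearMap.zero_apply]

instance : IsScalarTower ℂ ↥P (RelT h M) := by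
  constructor
  intro c p x
  have : pAct h M (c • p) = c • pAct h M p := by
    refine relT_hom_ext h M ?_
    intro q m
    rw [pAct_mk, LinearMap.smul_apply, pAct_mk, smul_mul_assoc, ← TensorProduct.smul_tmul',
      map_smul]
  simp only [pSmul_def, this, LinearMap.smul_apply]


variable {M} {N : Type} [AddCommGroup N] [Module ℂ N] [Module ↥B N] [IsScalarTower ℂ ↥B N]

lemma map_mk' (f : M →ₗ[↥B] N) (p : ↥P) (m : M) :
    RelT.map h f (mkT h M (p ⊗ₜ[ℂ] m)) = mkT h N (p ⊗ₜ[ℂ] f m) := rfl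

def mapP (f : M →ₗ[↥B] N) : RelT h M →ₗ[↥P] RelT h N where
  toFun := RelT.map h f
  map_add' := map_add _
  map_smul' p x := by
    have hc : (RelT.map h f).comp (pAct h M p) = (pAct h N p).comp (RelT.map h f) :=
      relT_hom_ext h M (by intro q m; simp [pAct_mk, map_mk'])
    simpa only [pSmul_def, LinearMap.comp_apply, RingHom.id_apply] using DFunLike.congr_fun hc x

lemma mapP_coe (f : M →ₗ[↥B] N) : (mapP h f : RelT h M → RelT h N) = RelT.map h f := rfl


variable (M) in
def cZero : ↥(⊤ : Subalgebra ℂ A) ⊗[ℂ] (↥P ⊗[ℂ] M) →ₗ[ℂ] RelT (le_top : B ≤ ⊤) M :=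
  (mkT (le_top : B ≤ ⊤) M) ∘ₗ
    (TensorProduct.map
      (TensorProduct.lift ((LinearMap.mul ℂ ↥(⊤ : Subalgebra ℂ A)).compl₂
        (Subalgebra.inclusion (le_top : P ≤ ⊤)).toLinearMap))
      (LinearMap.id : M →ₗ[ℂ] M)) ∘ₗ
    (TensorProduct.assoc ℂ (↥(⊤ : Subalgebra ℂ A)) (↥P) M).symm.toLinearMap

lemma cZero_apply (a : ↥(⊤ : Subalgebra ℂ A)) (p : ↥P) (m : M) :
    cZero (B := B) (P := P) M (a ⊗ₜ[ℂ] (p ⊗ₜ[ℂ] m)) =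
      mkT (le_top : B ≤ ⊤) M ((a * Subalgebra.inclusion (le_top : P ≤ ⊤) p) ⊗ₜ[ℂ] m) :=
  rfl

variable (M) in
def phiTwo : RelT h M →ₗ[ℂ] (↥(⊤ : Subalgebra ℂ A) →ₗ[ℂ] RelT (le_top : B ≤ ⊤) M) :=
  Submodule.liftQ (relRels h M)
    (TensorProduct.curry ((cZero (B := B) (P := P) M) ∘ₗ
      (TensorProduct.comm ℂ (↥P ⊗[ℂ] M) (↥(⊤ : Subalgebra ℂ A))).toLinearMap))
    (by
      rw [relRels, Submodule.span_le]
      rintro x ⟨q, b, m, rfl⟩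
      simp only [SetLike.mem_coe, LinearMap.mem_ker]
      apply LinearMap.ext
      intro a
      simp only [map_sub, LinearMap.sub_apply, TensorProduct.curry_apply,
        LinearMap.comp_apply, TensorProduct.comm_tmul, LinearEquiv.coe_coe,
        cZero_apply, LinearMap.zero_apply]
      rw [sub_eq_zero]
      have key : a * Subalgebra.inclusion (le_top : P ≤ ⊤) (q * Subalgebra.inclusion h b) =
          (a * Subalgebra.inclusion (le_top : P ≤ ⊤) q) *
            Subalgebra.inclusion (le_top : B ≤ ⊤) b := by
        rw [← Subalgebra.inclusion_inclusion h (le_top : P ≤ ⊤) b, map_mul, mul_assoc]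
      rw [key, mkT_rel (le_top : B ≤ ⊤) M (a * Subalgebra.inclusion (le_top : P ≤ ⊤) q) b m])

variable (M) in
def phiAux : ↥(⊤ : Subalgebra ℂ A) ⊗[ℂ] (RelT h M) →ₗ[ℂ] RelT (le_top : B ≤ ⊤) M :=
  TensorProduct.lift (phiTwo h M).flip

lemma phiAux_mk (a : ↥(⊤ : Subalgebra ℂ A)) (p : ↥P) (m : M) :
    phiAux h M (a ⊗ₜ[ℂ] mkT h M (p ⊗ₜ[ℂ] m)) =
      mkT (le_top : B ≤ ⊤) M ((a * Subalgebra.inclusion (le_top : P ≤ ⊤) p) ⊗ₜ[ℂ] m) :=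
  rfl

variable (M) in
def phi : RelT (le_top : P ≤ ⊤) (RelT h M) →ₗ[ℂ] RelT (le_top : B ≤ ⊤) M :=
  Submodule.liftQ (relRels (le_top : P ≤ ⊤) (RelT h M)) (phiAux h M)
    (by
      rw [relRels, Submodule.span_le]
      rintro x ⟨a, p', xm, rfl⟩
      simp only [SetLike.mem_coe, LinearMap.mem_ker, map_sub, sub_eq_zero]
      obtain ⟨y, rfl⟩ := mkT_surjective h M xm
      induction y using TensorProduct.induction_on with
      | zero => simp
      | tmul q m =>
          rw [pSmul_def, pAct_mk, phiAux_mk, phiAux_mk, map_mul, ← mul_assoc]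
      | add y z hy hz =>
          simp only [map_add, TensorProduct.tmul_add, smul_add, hy, hz])

lemma phi_mk (a : ↥(⊤ : Subalgebra ℂ A)) (p : ↥P) (m : M) :
    phi h M (mkT (le_top : P ≤ ⊤) (RelT h M) (a ⊗ₜ[ℂ] mkT h M (p ⊗ₜ[ℂ] m))) =
      mkT (le_top : B ≤ ⊤) M ((a * Subalgebra.inclusion (le_top : P ≤ ⊤) p) ⊗ₜ[ℂ] m) :=
  rfl

variable (M) in
def psi : RelT (le_top : B ≤ ⊤) M →ₗ[ℂ] RelT (le_top : P ≤ ⊤) (RelT h M) :=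
  Submodule.liftQ (relRels (le_top : B ≤ ⊤) M)
    ((mkT (le_top : P ≤ ⊤) (RelT h M)) ∘ₗ
      (TensorProduct.map (LinearMap.id : ↥(⊤ : Subalgebra ℂ A) →ₗ[ℂ] _)
        ((mkT h M) ∘ₗ (TensorProduct.mk ℂ (↥P) M 1))))
    (by
      rw [relRels, Submodule.span_le]
      rintro x ⟨a, b, m, rfl⟩
      simp only [SetLike.mem_coe, LinearMap.mem_ker, map_sub, sub_eq_zero,
        LinearMap.comp_apply, TensorProduct.map_tmul, LinearMap.id_apply,
        TensorProduct.mk_apply]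
      rw [← Subalgebra.inclusion_inclusion h (le_top : P ≤ ⊤) b,
        mkT_rel (le_top : P ≤ ⊤) (RelT h M) a (Subalgebra.inclusion h b)
          (mkT h M ((1 : ↥P) ⊗ₜ[ℂ] m))]
      have inner : (Subalgebra.inclusion h b) • (mkT h M ((1 : ↥P) ⊗ₜ[ℂ] m)) =
          mkT h M ((1 : ↥P) ⊗ₜ[ℂ] (b • m)) := by
        rw [pSmul_def, pAct_mk, mul_one, ← one_mul (Subalgebra.inclusion h b),
          mkT_rel h M 1 b m]
      rw [inner])

lemma psi_mk (a : ↥(⊤ : Subalgebra ℂ A)) (m : M) :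
    psi h M (mkT (le_top : B ≤ ⊤) M (a ⊗ₜ[ℂ] m)) =
      mkT (le_top : P ≤ ⊤) (RelT h M) (a ⊗ₜ[ℂ] mkT h M ((1 : ↥P) ⊗ₜ[ℂ] m)) :=
  rfl


lemma relT_hom_ext2 {C : Type} [AddCommGroup C] [Module ℂ C]
    {F G : RelT (le_top : P ≤ ⊤) (RelT h M) →ₗ[ℂ] C}
    (hFG : ∀ (a : ↥(⊤ : Subalgebra ℂ A)) (p : ↥P) (m : M),
      F (mkT (le_top : P ≤ ⊤) (RelT h M) (a ⊗ₜ[ℂ] mkT h M (p ⊗ₜ[ℂ] m))) =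
        G (mkT (le_top : P ≤ ⊤) (RelT h M) (a ⊗ₜ[ℂ] mkT h M (p ⊗ₜ[ℂ] m)))) : F = G := by
  apply relT_hom_ext
  intro a x
  obtain ⟨y, rfl⟩ := mkT_surjective h M x
  induction y using TensorProduct.induction_on with
  | zero => simp
  | tmul p m => exact hFG a p m
  | add y z hy hz => simp only [map_add, TensorProduct.tmul_add, hy, hz]

variable (M) in
def Phi : RelT (le_top : P ≤ ⊤) (RelT h M) ≃ₗ[ℂ] RelT (le_top : B ≤ ⊤) M :=
  LinearEquiv.ofLinear (phi h M) (psi h M)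
    (by
      apply relT_hom_ext
      intro a m
      simp only [LinearMap.comp_apply, LinearMap.id_coe, id_eq]
      rw [psi_mk, phi_mk, map_one, mul_one])
    (by
      apply relT_hom_ext2
      intro a p m
      simp only [LinearMap.comp_apply, LinearMap.id_coe, id_eq]
      rw [phi_mk, psi_mk]
      have inner : p • (mkT h M ((1 : ↥P) ⊗ₜ[ℂ] m)) = mkT h M (p ⊗ₜ[ℂ] m) := by
        rw [pSmul_def, pAct_mk, mul_one]
      rw [mkT_rel (le_top : P ≤ ⊤) (RelT h M) a p (mkT h M ((1 : ↥P) ⊗ₜ[ℂ] m)), inner])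

lemma Phi_nat (f : M →ₗ[↥B] N) :
    (RelT.map (le_top : B ≤ ⊤) f) ∘ₗ (Phi h M : RelT (le_top : P ≤ ⊤) (RelT h M) →ₗ[ℂ] _) =
      (Phi h N : RelT (le_top : P ≤ ⊤) (RelT h N) →ₗ[ℂ] _) ∘ₗ
        (RelT.map (le_top : P ≤ ⊤) (mapP h f)) := by
  apply relT_hom_ext2
  intro a p m
  simp only [LinearMap.comp_apply, LinearEquiv.coe_coe, Phi, LinearEquiv.ofLinear_apply]
  rw [phi_mk, map_mk' (le_top : B ≤ ⊤) f,
    map_mk' (le_top : P ≤ ⊤) (mapP h f) a (mkT h M (p ⊗ₜ[ℂ] m))]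
  have : mapP h f (mkT h M (p ⊗ₜ[ℂ] m)) = mkT h N (p ⊗ₜ[ℂ] f m) := map_mk' h f p m
  rw [this, phi_mk]

end Aux

end FFAux
end QHS

open QHS

/-- For `A` a Hopf algebra (over `ℂ`, with bijective antipode) and `(B, P)`
a nested pair of quantum homogeneous `A`-spaces, `P` is faithfully flat as a right
`B`-module. -/
theorem nested_pair_faithfully_flat
    (A : Type) [Ring A] [HopfAlgebra ℂ A]
    (hS : Function.Bijective (HopfAlgebra.antipode (R := ℂ) (A := A)))
    (B P : Subalgebra ℂ A) (hBP : B ≤ P)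
    (hB : IsQuantumHomogeneousSpace A B) (hP : IsQuantumHomogeneousSpace A P) :
    IsFaithfullyFlatRightOver A B P hBP := by
  intro M N L _ _ _ _ _ _ _ _ _ _ _ _ f g
  have h1 := hB.faithfullyFlat M N L f g
  have h2 := hP.faithfullyFlat (RelT hBP M) (RelT hBP N) (RelT hBP L)
    (mapP hBP f) (mapP hBP g)
  have h3 : Function.Exact (RelT.map (le_top : B ≤ ⊤) f) (RelT.map (le_top : B ≤ ⊤) g) ↔
      Function.Exact (RelT.map (le_top : P ≤ ⊤) (mapP hBP f))
        (RelT.map (le_top : P ≤ ⊤) (mapP hBP g)) :=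
    Function.Exact.iff_of_ladder_linearEquiv (e₁ := Phi hBP M) (e₂ := Phi hBP N)
      (e₃ := Phi hBP L) (Phi_nat hBP f) (Phi_nat hBP g)
  have h4 : Function.Exact (mapP hBP f) (mapP hBP g) ↔
      Function.Exact (RelT.map hBP f) (RelT.map hBP g) := Iff.rfl
  exact h1.trans (h3.trans (h2.symm.trans h4))
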